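/- For i ≥ j in {1,...,m} with m ≥ 1, define Q_{ij} to be the m×m matrix with entries Q_{ij}(x,x') = (1/4)(δ_i(x)δ_i(x') + δ_i(x)δ_j(x') + δ_j(x)δ_i(x') + δ_j(x)δ_j(x')). Then the family {Q_{ij} : i ≥ j} is linearly independent and forms a basis of the space of symmetric m×m real matrices. -/

import Mathlib

/-- The subspace of symmetric m×m real matrices. -/
def symSub (m : ℕ) : Submodule ℝ (Matrix (Fin m) (Fin m) ℝ) where
  carrier := {g | ∀ i j, g i j = g j i}
  add_mem' := by
    intro a b ha hb i j
    simp [Matrix.add_apply, ha i j, hb i j]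
  zero_mem' := by intro i j; rfl
  smul_mem' := by
    intro c g hg i j
    simp [Matrix.smul_apply, hg i j]

/-- The edge measure of the iid process with distribution (δ_i + δ_j)/2. -/
noncomputable def Qiid (m : ℕ) (p : Fin m × Fin m) : Matrix (Fin m) (Fin m) ℝ :=
  fun x x' => (1 / 4) *
    (((if x = p.1 then (1 : ℝ) else 0) + (if x = p.2 then 1 else 0)) *
     ((if x' = p.1 then (1 : ℝ) else 0) + (if x' = p.2 then 1 else 0)))

lemma Qiid_symm_idx (m : ℕ) (a b : Fin m) : Qiid m (a, b) = Qiid m (b, a) := by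
  funext x x'; simp only [Qiid]; ring

lemma Qiid_key (m : ℕ) (a b x x' : Fin m) :
    4 * Qiid m (a, b) x x' - Qiid m (a, a) x x' - Qiid m (b, b) x x' =
      (if x = a then (if x' = b then (1:ℝ) else 0) else 0) +
      (if x = b then (if x' = a then (1:ℝ) else 0) else 0) := by
  simp only [Qiid]
  split_ifs <;> norm_num

lemma Qiid_repr (m : ℕ) (g : Matrix (Fin m) (Fin m) ℝ) (hg : ∀ i j, g i j = g j i) :
    ∑ p : Fin m × Fin m, (g p.1 p.2 / 2) •
      ((4:ℝ) • Qiid m p - Qiid m (p.1, p.1) - Qiid m (p.2, p.2)) = g := by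
  funext x x'
  have happ : (∑ p : Fin m × Fin m, (g p.1 p.2 / 2) •
      ((4:ℝ) • Qiid m p - Qiid m (p.1, p.1) - Qiid m (p.2, p.2))) x x'
      = ∑ p : Fin m × Fin m, (g p.1 p.2 / 2) *
        (4 * Qiid m p x x' - Qiid m (p.1, p.1) x x' - Qiid m (p.2, p.2) x x') := by
    rw [Matrix.sum_apply]
    refine Finset.sum_congr rfl fun p _ => ?_
    simp [Matrix.smul_apply, Matrix.sub_apply, mul_sub]
  rw [happ]
  have : ∀ p : Fin m × Fin m, (g p.1 p.2 / 2) *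
        (4 * Qiid m p x x' - Qiid m (p.1, p.1) x x' - Qiid m (p.2, p.2) x x')
      = (g p.1 p.2 / 2) *
        ((if x = p.1 then (if x' = p.2 then (1:ℝ) else 0) else 0) +
         (if x = p.2 then (if x' = p.1 then (1:ℝ) else 0) else 0)) := by
    intro p
    rw [← Qiid_key m p.1 p.2 x x']
  simp only [this]
  rw [Fintype.sum_prod_type]
  simp [mul_add, Finset.sum_add_distrib, mul_ite, Finset.sum_ite_eq, Finset.sum_ite_eq', eq_comm]
  rw [hg x' x]
  ring

lemma Qiid_mem_span (m : ℕ) (a b : Fin m) :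
    Qiid m (a, b) ∈ Submodule.span ℝ
      (Set.range (fun p : {p : Fin m × Fin m // p.2 ≤ p.1} => Qiid m p.1)) := by
  rcases le_total b a with h | h
  · exact Submodule.subset_span ⟨⟨(a, b), h⟩, rfl⟩
  · rw [Qiid_symm_idx]
    exact Submodule.subset_span ⟨⟨(b, a), h⟩, rfl⟩

lemma span_eq_symSub (m : ℕ) :
    Submodule.span ℝ
      (Set.range (fun p : {p : Fin m × Fin m // p.2 ≤ p.1} => Qiid m p.1)) =
      symSub m := by
  apply le_antisymm
  · rw [Submodule.span_le]
    rintro _ ⟨⟨⟨a, b⟩, hle⟩, rfl⟩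
    intro i j
    simp only [Qiid]
    ring
  · intro g hg
    have hg' : ∀ i j, g i j = g j i := hg
    rw [← Qiid_repr m g hg']
    refine Submodule.sum_mem _ fun p _ => ?_
    refine Submodule.smul_mem _ _ ?_
    refine Submodule.sub_mem _ (Submodule.sub_mem _ ?_ ?_) ?_
    · exact Submodule.smul_mem _ _ (Qiid_mem_span m p.1 p.2)
    · exact Qiid_mem_span m p.1 p.1
    · exact Qiid_mem_span m p.2 p.2

lemma Qiid_indep (m : ℕ) :
    LinearIndependent ℝ
      (fun p : {p : Fin m × Fin m // p.2 ≤ p.1} => Qiid m p.1) := by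
  rw [Fintype.linearIndependent_iff]
  intro g hsum
  have happ : ∀ x x' : Fin m,
      ∑ q : {p : Fin m × Fin m // p.2 ≤ p.1}, g q * Qiid m q.1 x x' = 0 := by
    intro x x'
    have := congrFun (congrFun hsum x) x'
    rw [Matrix.sum_apply] at this
    simpa [Matrix.smul_apply] using this
  -- step 1: off-diagonal coefficients vanish
  have hoff : ∀ q : {p : Fin m × Fin m // p.2 ≤ p.1}, q.1.2 < q.1.1 → g q = 0 := by
    rintro ⟨⟨a, b⟩, hle⟩ hlt
    simp only at hlt
    have h := happ a b
    rw [Finset.sum_eq_single (⟨(a, b), hle⟩ : {p : Fin m × Fin m // p.2 ≤ p.1})] at h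
    · have hab : a ≠ b := ne_of_gt hlt
      norm_num [Qiid, hab, hab.symm] at h
      exact h
    · rintro ⟨⟨c, d⟩, hdc⟩ - hne
      simp only at hdc
      have hne' : (c, d) ≠ (a, b) := by
        intro hcd
        exact hne (by simp [Subtype.ext_iff, hcd])
      simp only [Qiid]
      have hab : a ≠ b := ne_of_gt hlt
      rcases eq_or_ne a c with hac | hac
      · rcases eq_or_ne b d with hbd | hbd
        · exact absurd (by rw [hac, hbd]) hne'.symm
        · rcases eq_or_ne b c with hbc | hbc
          · exact absurd (hac.trans hbc.symm) hab
          · rw [if_neg hbc, if_neg hbd]; ring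
      · rcases eq_or_ne a d with had | had
        · rcases eq_or_ne b c with hbc | hbc
          · -- d = a > b = c ≥ d, contradiction
            exact absurd hdc (by rw [← had, ← hbc]; exact not_le.mpr hlt)
          · rw [if_neg hbc]
            rcases eq_or_ne b d with hbd | hbd
            · exact absurd (had.trans hbd.symm) hab
            · rw [if_neg hbd]; ring
        · rw [if_neg hac, if_neg had]; ring
    · intro h; exact absurd (Finset.mem_univ _) h
  -- step 2: diagonal coefficients vanish
  intro q
  rcases q with ⟨⟨a, b⟩, hle⟩
  rcases lt_or_eq_of_le hle with hlt | heq
  · exact hoff ⟨(a, b), hle⟩ hlt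
  · have hba : b = a := heq
    subst hba
    have h := happ b b
    rw [Finset.sum_eq_single (⟨(b, b), hle⟩ : {p : Fin m × Fin m // p.2 ≤ p.1})] at h
    · norm_num [Qiid] at h
      exact h
    · rintro ⟨⟨c, d⟩, hdc⟩ - hne
      simp only at hdc
      rcases eq_or_ne d c with hdceq | hdcne
      · subst hdceq
        have hca : d ≠ b := by
          intro hca; exact hne (by simp [Subtype.ext_iff, hca])
        simp only [Qiid]
        rw [if_neg (Ne.symm hca)]
        ring
      · have : g ⟨(c, d), hdc⟩ = 0 := hoff _ (lt_of_le_of_ne hdc hdcne)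
        rw [this, zero_mul]
    · intro h; exact absurd (Finset.mem_univ _) h

/-- The family {Q_{ij} : i ≥ j} is linearly independent and
spans the space of symmetric m×m real matrices. -/
theorem Qiid_basis_symmetric (m : ℕ) (hm : 1 ≤ m) :
    LinearIndependent ℝ
      (fun p : {p : Fin m × Fin m // p.2 ≤ p.1} => Qiid m p.1) ∧
    Submodule.span ℝ
      (Set.range (fun p : {p : Fin m × Fin m // p.2 ≤ p.1} => Qiid m p.1)) =
      symSub m :=
  ⟨Qiid_indep m, span_eq_symSub m⟩
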